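/- Let Ω ⊂ ℝ³ × ℝ be open and let u : Ω → ℝ be twice continuously differentiable. Then at every point (x,t) ∈ Ω with t ≠ 0 there holds the pointwise identity (u_tt − Δu + u⁵)(t u_t + x·∇u + u) = ∂_t( t Q₀ + u_t u ) − div_x( t P₀ ) + R₀, where Q₀ = ½|u_t|² + ½|∇u|² + |u|⁶/6 + ((x/t)·∇u) u_t, P₀ = (x/t)( ½|u_t|² − ½|∇u|² − |u|⁶/6 ) + ( u_t + (x/t)·∇u + u/t ) ∇u, and R₀ = |u|⁶/3. -/

import Mathlib

open MeasureTheory Filter Set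

noncomputable section

/-- Euclidean 3-space. -/
abbrev E3 := EuclideanSpace ℝ (Fin 3)

/-- First time derivative `u_t` of `u = u(x,t)`. -/
noncomputable def ut (u : E3 × ℝ → ℝ) (x : E3) (t : ℝ) : ℝ := deriv (fun s => u (x, s)) t

/-- Second time derivative `u_tt` of `u = u(x,t)`. -/
noncomputable def utt (u : E3 × ℝ → ℝ) (x : E3) (t : ℝ) : ℝ :=
  deriv (fun s => deriv (fun r => u (x, r)) s) t

/-- Spatial gradient `∇u` of `u = u(x,t)`. -/
noncomputable def sgrad (u : E3 × ℝ → ℝ) (x : E3) (t : ℝ) : E3 := gradient (fun y => u (y, t)) x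

/-- Spatial Laplacian `Δu` of `u = u(x,t)`, as the sum of the second derivatives in the
coordinate directions. -/
noncomputable def slap (u : E3 × ℝ → ℝ) (x : E3) (t : ℝ) : ℝ :=
  ∑ i : Fin 3, fderiv ℝ (fun y => fderiv ℝ (fun z => u (z, t)) y (EuclideanSpace.single i 1)) x
      (EuclideanSpace.single i 1)

/-- The quantity `Q₀ = ½|u_t|² + ½|∇u|² + |u|⁶/6 + ((x/t)·∇u) u_t`. -/
noncomputable def Q0 (u : E3 × ℝ → ℝ) (x : E3) (t : ℝ) : ℝ :=
  (ut u x t) ^ 2 / 2 + ‖sgrad u x t‖ ^ 2 / 2 + |u (x, t)| ^ 6 / 6 +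
    (inner ℝ (t⁻¹ • x) (sgrad u x t) : ℝ) * ut u x t

/-- The vector field
`P₀ = (x/t)(½|u_t|² − ½|∇u|² − |u|⁶/6) + (u_t + (x/t)·∇u + u/t) ∇u`. -/
noncomputable def P0 (u : E3 × ℝ → ℝ) (x : E3) (t : ℝ) : E3 :=
  ((ut u x t) ^ 2 / 2 - ‖sgrad u x t‖ ^ 2 / 2 - |u (x, t)| ^ 6 / 6) • (t⁻¹ • x) +
    (ut u x t + (inner ℝ (t⁻¹ • x) (sgrad u x t) : ℝ) + u (x, t) / t) • sgrad u x t

/-- Spatial divergence of a vector field `F : ℝ³ → ℝ³`. -/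
noncomputable def divx (F : E3 → E3) (x : E3) : ℝ :=
  ∑ i : Fin 3, (inner ℝ (fderiv ℝ F x (EuclideanSpace.single i 1)) (EuclideanSpace.single i 1) : ℝ)

theorem myDivConst {E : Type*} [NormedAddCommGroup E] [NormedSpace ℝ E] {f : E → ℝ}
    {D : E →L[ℝ] ℝ} {x : E} (h : HasFDerivAt f D x) (c : ℝ) :
    HasFDerivAt (fun y => f y / c) (c⁻¹ • D) x := by
  simp only [div_eq_mul_inv]
  simpa [mul_comm] using h.mul_const c⁻¹

set_option maxHeartbeats 2000000 in
open Topology ContinuousLinearMap in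
/-- identity (4.1): for any `C²` function `u` on an open set
`Ω ⊂ ℝ³ × ℝ`, at every point of `Ω` with `t ≠ 0`,
`(u_tt − Δu + u⁵)(t u_t + x·∇u + u) = ∂_t(t Q₀ + u_t u) − div_x(t P₀) + R₀`
with `R₀ = |u|⁶/3`. -/
theorem statement15 (Ω : Set (E3 × ℝ)) (hΩ : IsOpen Ω) (u : E3 × ℝ → ℝ)
    (hu : ContDiffOn ℝ 2 u Ω) :
    ∀ (x : E3) (t : ℝ), (x, t) ∈ Ω → t ≠ 0 →
      (utt u x t - slap u x t + (u (x, t)) ^ 5) *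
          (t * ut u x t + (inner ℝ x (sgrad u x t) : ℝ) + u (x, t)) =
        deriv (fun s => s * Q0 u x s + ut u x s * u (x, s)) t -
          divx (fun y => t • P0 u y t) x + |u (x, t)| ^ 6 / 3 := by
  intro x t hmem ht
  have hnh : Ω ∈ 𝓝 (x, t) := hΩ.mem_nhds hmem
  set f : E3 × ℝ → (E3 × ℝ) →L[ℝ] ℝ := fderiv ℝ u with hfdef
  have hdiff : ∀ q ∈ Ω, DifferentiableAt ℝ u q := fun q hq =>
    ((hu q hq).differentiableWithinAt (by norm_num)).differentiableAt (hΩ.mem_nhds hq)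
  have hC2 : ContDiffAt ℝ 2 u (x, t) := (hu (x,t) hmem).contDiffAt hnh
  have hf1 : ContDiffAt ℝ 1 f (x, t) := hC2.fderiv_right le_rfl
  have hfd : DifferentiableAt ℝ f (x, t) := hf1.differentiableAt (by norm_num)
  set B := fderiv ℝ f (x, t) with hBdef
  have hB : HasFDerivAt f B (x, t) := hfd.hasFDerivAt
  have hBsymm : ∀ v w, B v w = B w v :=
    second_derivative_symmetric_of_eventually
      (by filter_upwards [hnh] with q hq using (hdiff q hq).hasFDerivAt) hB
  set τ : E3 × ℝ := ((0 : E3), (1:ℝ)) with hτdef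
  have hcurveT : ∀ x' : E3, ∀ s : ℝ, HasDerivAt (fun s : ℝ => (x', s)) τ s :=
    fun x' s => HasDerivAt.prodMk (hasDerivAt_const (𝕜 := ℝ) s x') (hasDerivAt_id s)
  have hcurveX : ∀ y : E3, ∀ s : ℝ,
      HasFDerivAt (fun y : E3 => (y, s)) (ContinuousLinearMap.inl ℝ E3 ℝ) y :=
    fun y s => (hasFDerivAt_id y).prodMk (hasFDerivAt_const (𝕜 := ℝ) s y)
  have hut : ∀ q ∈ Ω, ut u q.1 q.2 = f q τ := fun q hq =>
    ((hdiff q hq).hasFDerivAt.comp_hasDerivAt q.2 (hcurveT q.1 q.2)).deriv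
  set Φ : ((E3 × ℝ) →L[ℝ] ℝ) →L[ℝ] E3 :=
    ((InnerProductSpace.toDual ℝ E3).symm.toContinuousLinearEquiv.toContinuousLinearMap).comp
      ((ContinuousLinearMap.compL ℝ E3 (E3 × ℝ) ℝ).flip (ContinuousLinearMap.inl ℝ E3 ℝ))
    with hΦdef
  have hΦapp : ∀ T : (E3 × ℝ) →L[ℝ] ℝ,
      Φ T = (InnerProductSpace.toDual ℝ E3).symm (T.comp (ContinuousLinearMap.inl ℝ E3 ℝ)) :=
    fun T => rfl
  have hΦinner : ∀ (T : (E3 × ℝ) →L[ℝ] ℝ) (v : E3), (inner ℝ (Φ T) v : ℝ) = T (v, 0) := by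
    intro T v
    rw [hΦapp, InnerProductSpace.toDual_symm_apply]
    simp
  have hgrad : ∀ q ∈ Ω, sgrad u q.1 q.2 = Φ (f q) := by
    intro q hq
    rw [hΦapp]
    unfold sgrad gradient
    congr 1
    exact ((hdiff q hq).hasFDerivAt.comp q.1 (hcurveX q.1 q.2)).fderiv
  have hevT : ∀ᶠ s in 𝓝 t, ((x, s) : E3 × ℝ) ∈ Ω :=
    ((continuous_const.prodMk continuous_id).continuousAt).preimage_mem_nhds hnh
  have hevX : ∀ᶠ y in 𝓝 x, ((y, t) : E3 × ℝ) ∈ Ω :=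
    ((continuous_id.prodMk continuous_const).continuousAt).preimage_mem_nhds hnh
  -- time derivatives
  have hU_t : HasDerivAt (fun s => u (x, s)) (f (x,t) τ) t :=
    (hdiff _ hmem).hasFDerivAt.comp_hasDerivAt t (hcurveT x t)
  have hf_t : HasDerivAt (fun s => f (x, s)) (B τ) t := hB.comp_hasDerivAt t (hcurveT x t)
  have hUt_t : HasDerivAt (fun s => ut u x s) (B τ τ) t := by
    have h2 : HasDerivAt (fun s => f (x,s) τ) (B τ τ) t := by
      simpa using hf_t.clm_apply (hasDerivAt_const t τ)
    refine h2.congr_of_eventuallyEq ?_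
    filter_upwards [hevT] with s hs
    exact hut (x, s) hs
  have hg_t : HasDerivAt (fun s => sgrad u x s) (Φ (B τ)) t := by
    have h2 : HasDerivAt (fun s => Φ (f (x,s))) (Φ (B τ)) t :=
      Φ.hasFDerivAt.comp_hasDerivAt t hf_t
    refine h2.congr_of_eventuallyEq ?_
    filter_upwards [hevT] with s hs
    exact hgrad (x, s) hs
  -- spatial derivatives
  have hU_X : HasFDerivAt (fun y => u (y, t))
      ((f (x,t)).comp (ContinuousLinearMap.inl ℝ E3 ℝ)) x :=
    (hdiff _ hmem).hasFDerivAt.comp x (hcurveX x t)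
  have hf_X : HasFDerivAt (fun y => f (y, t)) (B.comp (ContinuousLinearMap.inl ℝ E3 ℝ)) x :=
    hB.comp x (hcurveX x t)
  have hUt_X : HasFDerivAt (fun y => ut u y t)
      ((B.comp (ContinuousLinearMap.inl ℝ E3 ℝ)).flip τ) x := by
    have h2 : HasFDerivAt (fun y => f (y,t) τ)
        ((B.comp (ContinuousLinearMap.inl ℝ E3 ℝ)).flip τ) x := by
      simpa using hf_X.clm_apply (hasFDerivAt_const τ x)
    refine h2.congr_of_eventuallyEq ?_
    filter_upwards [hevX] with y hy
    exact hut (y, t) hy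
  have hg_X : HasFDerivAt (fun y => sgrad u y t)
      (Φ.comp (B.comp (ContinuousLinearMap.inl ℝ E3 ℝ))) x := by
    have h2 : HasFDerivAt (fun y => Φ (f (y,t)))
        (Φ.comp (B.comp (ContinuousLinearMap.inl ℝ E3 ℝ))) x :=
      Φ.hasFDerivAt.comp x hf_X
    refine h2.congr_of_eventuallyEq ?_
    filter_upwards [hevX] with y hy
    exact hgrad (y, t) hy
  -- utt and slap formulas
  have hutt : utt u x t = B τ τ := hUt_t.deriv
  have hslap : slap u x t = ∑ i : Fin 3,
      B (EuclideanSpace.single i 1, 0) (EuclideanSpace.single i 1, 0) := by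
    unfold slap
    refine Finset.sum_congr rfl fun i _ => ?_
    set e := (EuclideanSpace.single i (1:ℝ)) with he
    have h2 : HasFDerivAt (fun y => f (y,t) (e, 0))
        ((B.comp (ContinuousLinearMap.inl ℝ E3 ℝ)).flip (e, 0)) x := by
      simpa using hf_X.clm_apply (hasFDerivAt_const ((e, 0) : E3 × ℝ) x)
    have heq : (fun y => fderiv ℝ (fun z => u (z, t)) y e) =ᶠ[𝓝 x] fun y => f (y,t) (e, 0) := by
      filter_upwards [hevX] with y hy
      have : fderiv ℝ (fun z => u (z,t)) y = (f (y,t)).comp (ContinuousLinearMap.inl ℝ E3 ℝ) :=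
        ((hdiff _ hy).hasFDerivAt.comp y (hcurveX y t)).fderiv
      rw [this]; simp
    rw [heq.fderiv_eq, h2.fderiv]
    simp
  -- time derivative of s * Q0 + ut * u
  have hderiv_time : deriv (fun s => s * Q0 u x s + ut u x s * u (x, s)) t =
      (Q0 u x t
        + t * (ut u x t * B τ τ + (inner ℝ (sgrad u x t) (Φ (B τ)) : ℝ)
            + (u (x,t))^5 * f (x,t) τ
            + (-(t^2)⁻¹ * (inner ℝ x (sgrad u x t) : ℝ) * ut u x t
               + t⁻¹ * (inner ℝ x (Φ (B τ)) : ℝ) * ut u x t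
               + t⁻¹ * (inner ℝ x (sgrad u x t) : ℝ) * B τ τ)))
      + (B τ τ * u (x,t) + ut u x t * f (x,t) τ) := by
    have hfun : (fun s => s * Q0 u x s + ut u x s * u (x, s)) =
        (fun s => s * ((ut u x s) * (ut u x s) / 2
          + (inner ℝ (sgrad u x s) (sgrad u x s) : ℝ) / 2
          + (u (x, s))^6 / 6
          + s⁻¹ * (inner ℝ x (sgrad u x s) : ℝ) * ut u x s) + ut u x s * u (x, s)) := by
      funext s
      rw [Q0, real_inner_smul_left, Even.pow_abs (⟨3, rfl⟩ : Even 6),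
        ← real_inner_self_eq_norm_sq]
      ring
    rw [hfun]
    have h1 : HasDerivAt (fun s => (ut u x s) * (ut u x s) / 2)
        ((B τ τ * ut u x t + ut u x t * B τ τ)/2) t := (hUt_t.mul hUt_t).div_const 2
    have h2 : HasDerivAt (fun s => (inner ℝ (sgrad u x s) (sgrad u x s) : ℝ) / 2)
        (((inner ℝ (sgrad u x t) (Φ (B τ)) : ℝ) + (inner ℝ (Φ (B τ)) (sgrad u x t) : ℝ))/2) t :=
      (hg_t.inner ℝ hg_t).div_const 2
    have h3 : HasDerivAt (fun s => (u (x, s))^6 / 6) ((6 * (u (x,t))^5 * f (x,t) τ)/6) t := by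
      have h := (hU_t.pow 6).div_const 6
      exact h.congr_deriv (by norm_num)
    have h4 : HasDerivAt (fun s => s⁻¹ * (inner ℝ x (sgrad u x s) : ℝ) * ut u x s)
        ((-(t^2)⁻¹ * (inner ℝ x (sgrad u x t) : ℝ)
          + t⁻¹ * ((inner ℝ x (Φ (B τ)) : ℝ) + (inner ℝ (0:E3) (sgrad u x t) : ℝ))) * ut u x t
          + t⁻¹ * (inner ℝ x (sgrad u x t) : ℝ) * B τ τ) t :=
      (((hasDerivAt_inv ht).mul ((hasDerivAt_const t x).inner ℝ hg_t)).mul hUt_t)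
    have hq := (((hasDerivAt_id' (x := t)).mul (((h1.add h2).add h3).add h4)).add
      (hUt_t.mul hU_t))
    refine hq.deriv.trans ?_
    simp only [Pi.add_apply, Pi.mul_apply]
    have hQ0 : Q0 u x t = (ut u x t) * (ut u x t) / 2
          + (inner ℝ (sgrad u x t) (sgrad u x t) : ℝ) / 2
          + (u (x, t))^6 / 6
          + t⁻¹ * (inner ℝ x (sgrad u x t) : ℝ) * ut u x t := by
      rw [Q0, real_inner_smul_left, Even.pow_abs (⟨3, rfl⟩ : Even 6),
        ← real_inner_self_eq_norm_sq]; ring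
    rw [hQ0, real_inner_comm (Φ (B τ)) (sgrad u x t), inner_zero_left]
    ring
  -- spatial part
  set gg : E3 → E3 := fun y => sgrad u y t with hggdef
  set Sf : E3 → ℝ := fun y =>
    (ut u y t) ^ 2 / 2 - (inner ℝ (gg y) (gg y) : ℝ) / 2 - (u (y, t))^6 / 6 with hSfdef
  set Mf : E3 → ℝ := fun y =>
    ut u y t + t⁻¹ * (inner ℝ y (gg y) : ℝ) + u (y, t) / t with hMfdef
  have hPeq : (fun y => t • P0 u y t) = (fun y => t • (Sf y • (t⁻¹ • y) + Mf y • gg y)) := by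
    funext y
    rw [P0, real_inner_smul_left, Even.pow_abs (⟨3, rfl⟩ : Even 6),
      ← real_inner_self_eq_norm_sq]
  have hS_X0 :=
    ((myDivConst ((hasDerivAt_pow 2 (ut u x t)).comp_hasFDerivAt x hUt_X) 2).sub
      (myDivConst (hg_X.inner ℝ hg_X) 2)).sub
      (myDivConst ((hasDerivAt_pow 6 (u (x,t))).comp_hasFDerivAt x hU_X) 6)
  have hS_X : HasFDerivAt Sf _ x := hS_X0
  have hM_X : HasFDerivAt Mf _ x :=
    (hUt_X.add ((((hasFDerivAt_id x).inner ℝ hg_X)).const_mul t⁻¹)).add (myDivConst hU_X t)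
  have hPf : HasFDerivAt (fun y => Sf y • (t⁻¹ • y) + Mf y • gg y) _ x :=
    (hS_X.smul ((hasFDerivAt_id x).const_smul t⁻¹)).add (hM_X.smul hg_X)
  set G : E3 := Φ (B τ) with hGdef
  set Hg : E3 := Φ (B (gg x, 0)) with hHgdef
  set Hx : E3 := Φ (B (x, 0)) with hHxdef
  have hcoord : ∀ (v : E3) (i : Fin 3), (inner ℝ v (EuclideanSpace.single i (1:ℝ)) : ℝ) = v i := by
    intro v i
    rw [EuclideanSpace.inner_single_right]
    simp
  have hcoord' : ∀ (v : E3) (i : Fin 3), (inner ℝ (EuclideanSpace.single i (1:ℝ)) v : ℝ) = v i := by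
    intro v i
    rw [real_inner_comm]
    exact hcoord v i
  have hee : ∀ i : Fin 3,
      (inner ℝ (EuclideanSpace.single i (1:ℝ)) (EuclideanSpace.single i (1:ℝ)) : ℝ) = 1 := by
    intro i
    rw [hcoord]
    simp
  have hBτe : ∀ i : Fin 3, B (EuclideanSpace.single i 1, 0) τ = G i := by
    intro i
    rw [hBsymm, ← hΦinner (B τ), ← hGdef, hcoord]
  have hHge : ∀ i : Fin 3, (inner ℝ (gg x) (Φ (B (EuclideanSpace.single i 1, 0))) : ℝ) = Hg i := by
    intro i
    rw [real_inner_comm, hΦinner, hBsymm, ← hΦinner (B (gg x, 0)), ← hHgdef, hcoord]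
  have hHge' : ∀ i : Fin 3, (inner ℝ (Φ (B (EuclideanSpace.single i 1, 0))) (gg x) : ℝ) = Hg i := by
    intro i
    rw [real_inner_comm]
    exact hHge i
  have hfe : ∀ i : Fin 3, f (x, t) (EuclideanSpace.single i 1, 0) = gg x i := by
    intro i
    rw [← hΦinner (f (x,t)), ← hgrad (x, t) hmem]
    exact hcoord _ i
  have hxΦ : ∀ i : Fin 3, (inner ℝ x (Φ (B (EuclideanSpace.single i 1, 0))) : ℝ) = Hx i := by
    intro i
    rw [real_inner_comm, hΦinner, hBsymm, ← hΦinner (B (x, 0)), ← hHxdef, hcoord]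
  have hΦee : ∀ i : Fin 3, (inner ℝ (Φ (B (EuclideanSpace.single i 1, 0)))
      (EuclideanSpace.single i 1) : ℝ)
      = B (EuclideanSpace.single i 1, 0) (EuclideanSpace.single i 1, 0) :=
    fun i => hΦinner _ _
  have hsum : ∀ v w : E3, ∑ i : Fin 3, v i * w i = (inner ℝ v w : ℝ) := by
    intro v w
    rw [PiLp.inner_apply]
    simp [RCLike.inner_apply, conj_trivial, mul_comm]
  have hdivx : divx (fun y => t • P0 u y t) x =
      3 * Sf x + ut u x t * (inner ℝ G x : ℝ) - (inner ℝ Hg x : ℝ)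
        - (u (x,t))^5 * (inner ℝ (gg x) x : ℝ) + t * Mf x * slap u x t
        + t * (inner ℝ G (gg x) : ℝ) + (inner ℝ Hx (gg x) : ℝ)
        + 2 * (inner ℝ (gg x) (gg x) : ℝ) := by
    unfold divx
    rw [hPeq]
    rw [HasFDerivAt.fderiv (f := fun y => t • (Sf y • t⁻¹ • y + Mf y • gg y)) (hPf.const_smul t)]
    simp only [ContinuousLinearMap.add_apply, ContinuousLinearMap.smul_apply,
      ContinuousLinearMap.coe_smul', Pi.smul_apply, ContinuousLinearMap.smulRight_apply,
      ContinuousLinearMap.comp_apply, ContinuousLinearMap.flip_apply,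
      ContinuousLinearMap.sub_apply, fderivInnerCLM_apply, ContinuousLinearMap.prod_apply,
      ContinuousLinearMap.coe_id', id_eq, ContinuousLinearMap.inl_apply,
      inner_add_left, real_inner_smul_left, smul_eq_mul]
    trans (∑ i : Fin 3, (Sf x + ut u x t * (G i * x i) - Hg i * x i
        - (u (x,t))^5 * (gg x i * x i)
        + (t * Mf x) * B (EuclideanSpace.single i 1, 0) (EuclideanSpace.single i 1, 0)
        + t * (G i * gg x i) + Hx i * gg x i + 2 * (gg x i * gg x i)))
    · refine Finset.sum_congr rfl fun i _ => ?_
      rw [hee i, hBτe i, hHge i, hHge' i, hfe i, hcoord x i, hxΦ i, hcoord' (gg x) i,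
        hcoord (gg x) i, hΦee i]
      push_cast
      field_simp
      ring
    · simp only [Finset.sum_add_distrib, Finset.sum_sub_distrib, ← Finset.mul_sum,
        Finset.sum_const, Finset.card_univ, Fintype.card_fin, nsmul_eq_mul]
      rw [hsum G x, hsum Hg x, hsum (gg x) x, hsum G (gg x), hsum Hx (gg x),
        hsum (gg x) (gg x), ← hslap]
      push_cast
      ring
  -- final assembly
  have hfτ : f (x, t) τ = ut u x t := (hut (x, t) hmem).symm
  have hggx : gg x = sgrad u x t := rfl
  have hHgHx : (inner ℝ Hg x : ℝ) = (inner ℝ Hx (gg x) : ℝ) := by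
    rw [hHgdef, hHxdef, hΦinner, hΦinner, hBsymm]
  have hQ0v : Q0 u x t = (ut u x t) * (ut u x t) / 2
        + (inner ℝ (sgrad u x t) (sgrad u x t) : ℝ) / 2
        + (u (x, t))^6 / 6
        + t⁻¹ * (inner ℝ x (sgrad u x t) : ℝ) * ut u x t := by
    rw [Q0, real_inner_smul_left, Even.pow_abs (⟨3, rfl⟩ : Even 6),
      ← real_inner_self_eq_norm_sq]
    ring
  rw [hderiv_time, hdivx, hutt, hQ0v, hHgHx, hfτ, hggx,
    Even.pow_abs (⟨3, rfl⟩ : Even 6), hSfdef, hMfdef, hggdef]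
  simp only [← real_inner_self_eq_norm_sq]
  rw [real_inner_comm (sgrad u x t) x, real_inner_comm G x, real_inner_comm G (sgrad u x t),
    real_inner_comm (sgrad u x t) (Φ (B τ))]
  field_simp
  ring
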